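/- Let Q be a quantum matrix of size m and let S ⊆ Fin m be a nonempty subset. Then the coordinate subspace L_S is contained in the point cone V_Q if and only if the principal submatrix Q(S) has rank 1. -/

import Mathlib

/-- A quantum matrix of size `m`: all entries nonzero, diagonal entries `1`,
and `Q i j * Q j i = 1` for all `i, j`. -/
def IsQuantumMatrix {m : ℕ} (Q : Matrix (Fin m) (Fin m) ℂ) : Prop :=
  (∀ i j, Q i j ≠ 0) ∧ (∀ i, Q i i = 1) ∧ (∀ i j, Q i j * Q j i = 1)

/-- The point cone of a quantum matrix `Q`. -/
def pointCone {m : ℕ} (Q : Matrix (Fin m) (Fin m) ℂ) : Set (Fin m → ℂ) :=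
  {u | u ≠ 0 ∧ ∀ i j k : Fin m, i < j → j < k →
    (Q i j * Q j k - Q i k) * u i * u j * u k = 0}

/-- The (punctured) coordinate subspace of `ℂ^m` supported on `S`. -/
def coordSubspace {m : ℕ} (S : Set (Fin m)) : Set (Fin m → ℂ) :=
  {u | u ≠ 0 ∧ ∀ i, i ∉ S → u i = 0}

/-- The principal submatrix of `Q` with rows and columns indexed by `S`. -/
def principalSubmatrix {m : ℕ} (Q : Matrix (Fin m) (Fin m) ℂ) (S : Finset (Fin m)) :
    Matrix {x : Fin m // x ∈ S} {x : Fin m // x ∈ S} ℂ :=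
  Q.submatrix (fun i => i.1) (fun j => j.1)

/-- From the sorted triple relation on `S`, the full multiplicative cocycle identity. -/
lemma cocycle_of_sorted {m : ℕ} (Q : Matrix (Fin m) (Fin m) ℂ) (hQ : IsQuantumMatrix Q)
    (S : Finset (Fin m))
    (h : ∀ i j k : Fin m, i ∈ S → j ∈ S → k ∈ S → i < j → j < k → Q i j * Q j k = Q i k) :
    ∀ i j k : Fin m, i ∈ S → j ∈ S → k ∈ S → Q i j * Q j k = Q i k := by
  obtain ⟨hne, hdiag, hinv⟩ := hQ
  intro i j k hi hj hk
  rcases lt_trichotomy i j with hij | rfl | hij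
  · rcases lt_trichotomy j k with hjk | rfl | hjk
    · exact h i j k hi hj hk hij hjk
    · rw [hdiag, mul_one]
    · rcases lt_trichotomy i k with hik | rfl | hik
      · have e := h i k j hi hk hj hik hjk
        calc Q i j * Q j k = (Q i k * Q k j) * Q j k := by rw [e]
          _ = Q i k * (Q k j * Q j k) := by ring
          _ = Q i k := by rw [hinv, mul_one]
      · rw [hinv, hdiag]
      · have e := h k i j hk hi hj hik hij
        apply mul_left_cancel₀ (hne k i)
        calc Q k i * (Q i j * Q j k) = (Q k i * Q i j) * Q j k := by ring
          _ = Q k j * Q j k := by rw [e]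
          _ = 1 := hinv k j
          _ = Q k i * Q i k := (hinv k i).symm
  · rw [hdiag, one_mul]
  · rcases lt_trichotomy j k with hjk | rfl | hjk
    · rcases lt_trichotomy i k with hik | rfl | hik
      · have e := h j i k hj hi hk hij hik
        apply mul_left_cancel₀ (hne j i)
        calc Q j i * (Q i j * Q j k) = (Q j i * Q i j) * Q j k := by ring
          _ = Q j k := by rw [hinv, one_mul]
          _ = Q j i * Q i k := e.symm
      · rw [hinv, hdiag]
      · have e := h j k i hj hk hi hjk hik
        apply mul_right_cancel₀ (hne k i)
        calc (Q i j * Q j k) * Q k i = Q i j * (Q j k * Q k i) := by ring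
          _ = Q i j * Q j i := by rw [e]
          _ = 1 := hinv i j
          _ = Q i k * Q k i := (hinv i k).symm
    · rw [hdiag, mul_one]
    · have e := h k j i hk hj hi hjk hij
      apply mul_right_cancel₀ (hne k i)
      calc (Q i j * Q j k) * Q k i = Q i j * (Q j k * Q k j) * Q j i := by
            rw [← e]; ring
        _ = Q i j * Q j i := by rw [hinv, mul_one]
        _ = 1 := hinv i j
        _ = Q i k * Q k i := (hinv i k).symm

theorem stmt_3 {m : ℕ} (Q : Matrix (Fin m) (Fin m) ℂ) (hQ : IsQuantumMatrix Q)
    (S : Finset (Fin m)) (hS : S.Nonempty) :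
    coordSubspace (↑S : Set (Fin m)) ⊆ pointCone Q ↔
      (principalSubmatrix Q S).rank = 1 := by
  obtain ⟨hne, hdiag, hinv⟩ := hQ
  set A := principalSubmatrix Q S with hA
  constructor
  · intro h
    -- first extract the sorted relation
    have hsorted : ∀ i j k : Fin m, i ∈ S → j ∈ S → k ∈ S → i < j → j < k →
        Q i j * Q j k = Q i k := by
      intro i j k hi hj hk hij hjk
      classical
      set u : Fin m → ℂ := fun x => if x = i ∨ x = j ∨ x = k then 1 else 0 with hu
      have hui : u i = 1 := by simp [hu]
      have huj : u j = 1 := by simp [hu]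
      have huk : u k = 1 := by simp [hu]
      have humem : u ∈ coordSubspace (↑S : Set (Fin m)) := by
        refine ⟨?_, ?_⟩
        · intro h0
          have := congrFun h0 i
          rw [hui] at this
          exact one_ne_zero this
        · intro x hx
          have : ¬(x = i ∨ x = j ∨ x = k) := by
            rintro (rfl | rfl | rfl) <;> exact hx (by simpa using ‹_ ∈ S›)
          simp [hu, this]
      have := (h humem).2 i j k hij hjk
      rw [hui, huj, huk] at this
      simpa [sub_eq_zero] using this
    have hcoc := cocycle_of_sorted Q ⟨hne, hdiag, hinv⟩ S hsorted
    -- rank = 1 : the range of mulVecLin is spanned by the column at a base point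
    obtain ⟨a, ha⟩ := hS
    set a' : {x : Fin m // x ∈ S} := ⟨a, ha⟩ with ha'
    set v : {x : Fin m // x ∈ S} → ℂ := fun i => Q i.1 a with hv
    have hv0 : v ≠ 0 := by
      intro h0
      have := congrFun h0 a'
      rw [hv] at this
      simp only [ha'] at this
      rw [hdiag] at this
      exact one_ne_zero this
    have hrange : LinearMap.range A.mulVecLin = Submodule.span ℂ {v} := by
      apply le_antisymm
      · rintro x ⟨u, rfl⟩
        rw [Submodule.mem_span_singleton]
        refine ⟨∑ j, Q a j.1 * u j, ?_⟩
        funext i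
        simp only [Matrix.mulVecLin_apply, Matrix.mulVec, dotProduct, Pi.smul_apply,
          smul_eq_mul, hv]
        rw [Finset.sum_mul]
        apply Finset.sum_congr rfl
        intro j _
        have : Q i.1 a * Q a j.1 = Q i.1 j.1 := hcoc i.1 a j.1 i.2 ha j.2
        have hAij : A i j = Q i.1 j.1 := rfl
        rw [hAij, ← this]
        ring
      · rw [Submodule.span_le, Set.singleton_subset_iff]
        refine ⟨Pi.single a' 1, ?_⟩
        rw [Matrix.mulVecLin_apply, Matrix.mulVec_single]
        funext i
        simp [hv, hA, principalSubmatrix, ha']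
    rw [Matrix.rank, hrange]
    exact finrank_span_singleton hv0
  · -- rank = 1 implies the sorted relation, hence containment in the point cone
    intro hrank
    have hsorted : ∀ i j k : Fin m, i ∈ S → j ∈ S → k ∈ S → Q i k * Q k j = Q i j := by
      intro i j k hi hj hk
      have hprin : (LinearMap.range A.mulVecLin).IsPrincipal :=
        (Submodule.finrank_le_one_iff_isPrincipal _).mp (le_of_eq hrank)
      obtain ⟨v, hvspan⟩ := hprin
      have col : ∀ (j : {x : Fin m // x ∈ S}), (fun i : {x : Fin m // x ∈ S} => A i j) ∈
          LinearMap.range A.mulVecLin := by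
        intro j
        refine ⟨Pi.single j 1, ?_⟩
        rw [Matrix.mulVecLin_apply, Matrix.mulVec_single]
        funext i; simp
      set i' : {x : Fin m // x ∈ S} := ⟨i, hi⟩
      set j' : {x : Fin m // x ∈ S} := ⟨j, hj⟩
      set k' : {x : Fin m // x ∈ S} := ⟨k, hk⟩
      have hcj := col j'
      have hck := col k'
      rw [hvspan, Submodule.mem_span_singleton] at hcj hck
      obtain ⟨α, hα⟩ := hcj
      obtain ⟨β, hβ⟩ := hck
      have hAxy : ∀ (x y : {x : Fin m // x ∈ S}), A x y = Q x.1 y.1 := fun _ _ => rfl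
      -- evaluate at rows j', k', i'
      have hαj : α * v j' = 1 := by
        have := congrFun hα j'
        simpa [hAxy, hdiag] using this
      have hαi : α * v i' = Q i j := by
        have := congrFun hα i'
        simpa [hAxy] using this
      have hβk : β * v k' = 1 := by
        have := congrFun hβ k'
        simpa [hAxy, hdiag] using this
      have hβi : β * v i' = Q i k := by
        have := congrFun hβ i'
        simpa [hAxy] using this
      have hβj : β * v j' = Q j k := by
        have := congrFun hβ j'
        simpa [hAxy] using this
      -- β ≠ 0 and v i' relations
      have hβ0 : β ≠ 0 := by
        intro h0; rw [h0, zero_mul] at hβk; exact one_ne_zero hβk.symm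
      have hα0 : α ≠ 0 := by
        intro h0; rw [h0, zero_mul] at hαj; exact one_ne_zero hαj.symm
      -- Q i k * Q k j = Q i j
      -- Q k j = (Q j k)⁻¹ ; Q j k = β * v j' ; and α * v j' = 1 → v j' = α⁻¹
      -- so Q i k * Q k j = (β v i') * (α/β) = α v i' = Q i j
      have hkj : Q j k * Q k j = 1 := hinv j k
      apply mul_left_cancel₀ (hne j k)
      calc Q j k * (Q i k * Q k j) = Q i k * (Q j k * Q k j) := by ring
        _ = Q i k := by rw [hkj, mul_one]
        _ = β * v i' := hβi.symm
        _ = Q j k * Q i j := by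
            rw [← hβj, ← hαi]
            rw [show β * v j' * (α * v i') = (α * v j') * (β * v i') by ring, hαj, one_mul]
    intro u hu
    obtain ⟨hu0, husupp⟩ := hu
    refine ⟨hu0, ?_⟩
    intro i j k hij hjk
    classical
    by_cases hi : i ∈ S
    · by_cases hj : j ∈ S
      · by_cases hk : k ∈ S
        · have : Q i j * Q j k = Q i k := by
            have h1 := hsorted i j k hi hj hk  -- Q i k * Q k j = Q i j
            have h2 : Q j k * Q k j = 1 := hinv j k
            apply mul_right_cancel₀ (hne k j)
            calc Q i j * Q j k * Q k j = Q i j * (Q j k * Q k j) := by ring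
              _ = Q i j := by rw [h2, mul_one]
              _ = Q i k * Q k j := h1.symm
          rw [this, sub_self, zero_mul, zero_mul, zero_mul]
        · rw [husupp k (by simpa using hk), mul_zero]
      · rw [husupp j (by simpa using hj), mul_zero, zero_mul]
    · rw [husupp i (by simpa using hi), mul_zero, zero_mul, zero_mul]
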